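/- Let C be a bounded closed convex set, u ∈ C, v ∈ ℝⁿ, and 0 < γ < 1/2. If 0 < ε < γ‖u − P_C^D(v)‖_D² / (1 − γ + ‖v − P_C^D(v)‖_D + 2γ‖u − P_C^D(v)‖_D + diam C), then every w ∈ C with ‖w − P_C^D(v)‖_D ≤ ε satisfies ⟨D(v − w), z − w⟩ ≤ γ‖w − u‖_D² for all z ∈ C. -/

import Mathlib

open RealInnerProductSpace

abbrev EucSp (n : ℕ) := EuclideanSpace ℝ (Fin n)

noncomputable def dipr {n : ℕ} (D : Matrix (Fin n) (Fin n) ℝ) (x y : EucSp n) : ℝ :=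
  ⟪(Matrix.toEuclideanLin D) x, y⟫

noncomputable def dnorm {n : ℕ} (D : Matrix (Fin n) (Fin n) ℝ) (x : EucSp n) : ℝ :=
  Real.sqrt (dipr D x x)

section helpers
variable {n : ℕ} {D : Matrix (Fin n) (Fin n) ℝ}

lemma dipr_self_nonneg (hD : D.PosDef) (x : EucSp n) : 0 ≤ dipr D x x := by
  have h := hD.posSemidef.dotProduct_mulVec_nonneg (x : Fin n → ℝ)
  simpa [dipr, Matrix.toEuclideanLin_apply, PiLp.inner_apply, RCLike.inner_apply,
    dotProduct, mul_comm] using h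

lemma dipr_symm (hD : D.PosDef) (x y : EucSp n) : dipr D x y = dipr D y x := by
  have hs := (Matrix.isHermitian_iff_isSymmetric).mp hD.isHermitian
  calc dipr D x y = ⟪(Matrix.toEuclideanLin D) x, y⟫ := rfl
  _ = ⟪x, (Matrix.toEuclideanLin D) y⟫ := hs x y
  _ = dipr D y x := real_inner_comm _ _

lemma dipr_add_left (x y z : EucSp n) : dipr D (x + y) z = dipr D x z + dipr D y z := by
  simp [dipr, map_add, inner_add_left]

lemma dipr_add_right (x y z : EucSp n) : dipr D x (y + z) = dipr D x y + dipr D x z := by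
  simp [dipr, inner_add_right]

lemma dipr_sub_left (x y z : EucSp n) : dipr D (x - y) z = dipr D x z - dipr D y z := by
  simp [dipr, map_sub, inner_sub_left]

lemma dipr_sub_right (x y z : EucSp n) : dipr D x (y - z) = dipr D x y - dipr D x z := by
  simp [dipr, inner_sub_right]

lemma dipr_smul_left (r : ℝ) (x y : EucSp n) : dipr D (r • x) y = r * dipr D x y := by
  simp [dipr, map_smul, real_inner_smul_left, PiLp.inner_apply, RCLike.inner_apply, Finset.mul_sum, mul_left_comm, mul_comm, mul_assoc]

lemma dipr_smul_right (r : ℝ) (x y : EucSp n) : dipr D x (r • y) = r * dipr D x y := by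
  simp [dipr, real_inner_smul_right, PiLp.inner_apply, RCLike.inner_apply, Finset.mul_sum, mul_left_comm, mul_comm, mul_assoc]

lemma dnorm_nonneg (x : EucSp n) : 0 ≤ dnorm D x := Real.sqrt_nonneg _

lemma dnorm_sq (hD : D.PosDef) (x : EucSp n) : dnorm D x ^ 2 = dipr D x x :=
  Real.sq_sqrt (dipr_self_nonneg hD x)

noncomputable def dCore (hD : D.PosDef) : PreInnerProductSpace.Core ℝ (EucSp n) where
  inner := dipr D
  conj_inner_symm := fun x y => by simpa using dipr_symm hD y x
  re_inner_nonneg := fun x => by simpa using dipr_self_nonneg hD x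
  add_left := fun x y z => dipr_add_left x y z
  smul_left := fun x y r => by simpa using dipr_smul_left r x y

lemma dipr_le (hD : D.PosDef) (x y : EucSp n) : dipr D x y ≤ dnorm D x * dnorm D y := by
  have h := InnerProductSpace.Core.inner_mul_inner_self_le (𝕜 := ℝ) (c := dCore hD) x y
  simp only [RCLike.re_to_real, Real.norm_eq_abs] at h
  have hxy : @inner ℝ _ (dCore hD).toInner x y = dipr D x y := rfl
  have hyx : @inner ℝ _ (dCore hD).toInner y x = dipr D y x := rfl
  have hxx : @inner ℝ _ (dCore hD).toInner x x = dipr D x x := rfl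
  have hyy : @inner ℝ _ (dCore hD).toInner y y = dipr D y y := rfl
  rw [hxy, hyx, hxx, hyy, dipr_symm hD y x] at h
  have h2 : (dipr D x y) ^ 2 ≤ (dnorm D x * dnorm D y) ^ 2 := by
    rw [mul_pow, dnorm_sq hD, dnorm_sq hD]
    calc (dipr D x y)^2 = |dipr D x y| * |dipr D x y| := by rw [← abs_mul, abs_mul_self, sq]
    _ ≤ _ := h
  nlinarith [dnorm_nonneg (D := D) x, dnorm_nonneg (D := D) y,
    mul_nonneg (dnorm_nonneg (D := D) x) (dnorm_nonneg (D := D) y)]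

lemma dnorm_neg (hD : D.PosDef) (x : EucSp n) : dnorm D (-x) = dnorm D x := by
  unfold dnorm
  congr 1
  have : dipr D (-x) (-x) = dipr D x x := by
    have h1 : (-x : EucSp n) = 0 - x := by abel
    rw [h1, dipr_sub_left, dipr_sub_right, dipr_sub_right]
    simp [dipr]
  rw [this]

lemma dnorm_sub_comm (hD : D.PosDef) (x y : EucSp n) : dnorm D (x - y) = dnorm D (y - x) := by
  rw [← dnorm_neg hD (y - x)]; congr 1; abel

lemma dnorm_triangle (hD : D.PosDef) (x y : EucSp n) :
    dnorm D (x + y) ≤ dnorm D x + dnorm D y := by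
  have hexp : dipr D (x + y) (x + y) = dipr D x x + 2 * dipr D x y + dipr D y y := by
    rw [dipr_add_left, dipr_add_right, dipr_add_right, dipr_symm hD y x]; ring
  have hle : dipr D (x + y) (x + y) ≤ (dnorm D x + dnorm D y) ^ 2 := by
    rw [hexp]
    have := dipr_le hD x y
    rw [← dnorm_sq hD x, ← dnorm_sq hD y]
    nlinarith
  calc dnorm D (x + y) = Real.sqrt (dipr D (x + y) (x + y)) := rfl
  _ ≤ Real.sqrt ((dnorm D x + dnorm D y) ^ 2) := Real.sqrt_le_sqrt hle
  _ = dnorm D x + dnorm D y := Real.sqrt_sq (by have := dnorm_nonneg (D := D) x; have := dnorm_nonneg (D := D) y; linarith)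

end helpers

/-- `p` is the exact projection of `v` onto `C` in the `D`-norm. -/
def IsDProj {n : ℕ} (D : Matrix (Fin n) (Fin n) ℝ) (C : Set (EucSp n)) (v p : EucSp n) : Prop :=
  p ∈ C ∧ ∀ z ∈ C, dnorm D (p - v) ≤ dnorm D (z - v)

/-- Variational inequality for the projection. -/
lemma dproj_var {n : ℕ} {D : Matrix (Fin n) (Fin n) ℝ} (hD : D.PosDef)
    {C : Set (EucSp n)} (hconv : Convex ℝ C) {v p : EucSp n} (hp : IsDProj D C v p)
    {z : EucSp n} (hz : z ∈ C) : dipr D (v - p) (z - p) ≤ 0 := by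
  set a : ℝ := dipr D (v - p) (z - p) with ha
  set b : ℝ := dipr D (z - p) (z - p) with hb
  have hb0 : 0 ≤ b := dipr_self_nonneg hD _
  -- key: for all t ∈ (0,1], 2*t*a ≤ t^2*b
  have key : ∀ t : ℝ, 0 < t → t ≤ 1 → 2 * t * a ≤ t ^ 2 * b := by
    intro t ht0 ht1
    have hmem : p + t • (z - p) ∈ C := by
      have := hconv hp.1 hz (by linarith : (0:ℝ) ≤ 1 - t) (le_of_lt ht0) (by ring)
      have heq : (1 - t) • p + t • z = p + t • (z - p) := by
        rw [smul_sub]; module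
      rwa [heq] at this
    have hle := hp.2 _ hmem
    have hsq : dipr D (p - v) (p - v) ≤ dipr D (p + t • (z - p) - v) (p + t • (z - p) - v) := by
      rw [← dnorm_sq hD, ← dnorm_sq hD]
      exact pow_le_pow_left₀ (dnorm_nonneg _) hle 2
    have hexp : dipr D (p + t • (z - p) - v) (p + t • (z - p) - v)
        = dipr D (p - v) (p - v) - 2 * t * a + t ^ 2 * b := by
      have h1 : p + t • (z - p) - v = (p - v) + t • (z - p) := by abel
      rw [h1, dipr_add_left, dipr_add_right, dipr_add_right]
      simp only [dipr_smul_left, dipr_smul_right]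
      rw [dipr_symm hD (z - p) (p - v)]
      have h2 : dipr D (p - v) (z - p) = -a := by
        rw [ha, dipr_sub_left, dipr_sub_left]; ring
      rw [h2, ← hb]; ring
    rw [hexp] at hsq
    linarith
  by_contra hpos
  push_neg at hpos
  rcases le_or_gt b 0 with hble | hbpos
  · have := key 1 one_pos le_rfl
    nlinarith
  · have htpos : 0 < min 1 (a / b) := lt_min one_pos (div_pos hpos hbpos)
    have := key _ htpos (min_le_left _ _)
    have hle2 : min 1 (a / b) * b ≤ (a / b) * b := by
      exact mul_le_mul_of_nonneg_right (min_le_right _ _) (le_of_lt hbpos)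
    rw [div_mul_cancel₀ _ (ne_of_gt hbpos)] at hle2
    nlinarith [sq_nonneg (min 1 (a/b))]

theorem stmt8 {n : ℕ} (C : Set (EucSp n)) (hcl : IsClosed C) (hconv : Convex ℝ C)
    (D : Matrix (Fin n) (Fin n) ℝ) (hD : D.PosDef)
    (u : EucSp n) (hu : u ∈ C) (v : EucSp n) (γ : ℝ) (hγ : 0 < γ ∧ γ < 1 / 2)
    (p : EucSp n) (hp : IsDProj D C v p)
    (diamC : ℝ) (hdiam : ∀ a ∈ C, ∀ b ∈ C, dnorm D (a - b) ≤ diamC)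
    (ε : ℝ) (hε0 : 0 < ε)
    (hε : ε < γ * (dnorm D (u - p)) ^ 2 /
      (1 - γ + dnorm D (v - p) + 2 * γ * dnorm D (u - p) + diamC)) :
    ∀ w ∈ C, dnorm D (w - p) ≤ ε →
      ∀ z ∈ C, dipr D (v - w) (z - w) ≤ γ * (dnorm D (w - u)) ^ 2 := by
  obtain ⟨hγ0, hγ2⟩ := hγ
  set A := dnorm D (u - p) with hA_def
  set V := dnorm D (v - p) with hV_def
  have hA0 : 0 ≤ A := dnorm_nonneg _
  have hV0 : 0 ≤ V := dnorm_nonneg _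
  have hdiam0 : 0 ≤ diamC := le_trans (dnorm_nonneg _) (hdiam u hu u hu)
  have hK : 0 < 1 - γ + V + 2 * γ * A + diamC := by nlinarith
  have hεK : ε * (1 - γ + V + 2 * γ * A + diamC) < γ * A ^ 2 := (lt_div_iff₀ hK).mp hε
  have hA : 0 < A := by nlinarith
  have hεA : 2 * ε ≤ A := by nlinarith
  intro w hw hwp z hz
  have hvar := dproj_var hD hconv hp hz
  -- decomposition
  have hdec : dipr D (v - w) (z - w)
      = dipr D (v - p) (z - p) + dipr D (v - p) (p - w) + dipr D (p - w) (z - w) := by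
    have h1 : v - w = (v - p) + (p - w) := by abel
    have h2 : z - w = (z - p) + (p - w) := by abel
    rw [h1, dipr_add_left]
    nth_rw 1 [h2]
    rw [dipr_add_right]
  have hpw : dnorm D (p - w) ≤ ε := by rwa [dnorm_sub_comm hD]
  have h2 : dipr D (v - p) (p - w) ≤ V * ε := by
    calc dipr D (v - p) (p - w) ≤ V * dnorm D (p - w) := dipr_le hD _ _
    _ ≤ V * ε := mul_le_mul_of_nonneg_left hpw hV0
  have h3 : dipr D (p - w) (z - w) ≤ ε * diamC := by
    calc dipr D (p - w) (z - w) ≤ dnorm D (p - w) * dnorm D (z - w) := dipr_le hD _ _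
    _ ≤ ε * diamC := mul_le_mul hpw (hdiam z hz w hw) (dnorm_nonneg _) (le_of_lt hε0)
  set N := dnorm D (w - u) with hN_def
  have hN0 : 0 ≤ N := dnorm_nonneg _
  have h4 : A - ε ≤ N := by
    have htr : A ≤ N + ε := by
      have heq : u - p = (u - w) + (w - p) := by abel
      calc A = dnorm D ((u - w) + (w - p)) := by rw [hA_def, heq]
      _ ≤ dnorm D (u - w) + dnorm D (w - p) := dnorm_triangle hD _ _
      _ = N + dnorm D (w - p) := by rw [dnorm_sub_comm hD u w]
      _ ≤ N + ε := by linarith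
    linarith
  have hNsq : (A - ε) ^ 2 ≤ N ^ 2 := by nlinarith
  rw [hdec]
  nlinarith [mul_le_mul_of_nonneg_left hNsq (le_of_lt hγ0),
    mul_pos hε0 (show (0:ℝ) < 1 - γ by linarith),
    mul_nonneg (le_of_lt hγ0) (sq_nonneg ε)]
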